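/- For nonnegative reals with ∑_{i=1}^t α_t^i · u_i where u_i = c/√i and α_t^i are the weights from learning rate α_t = (H+1)/(H+t), we have c/√t ≤ ∑_{i=1}^t α_t^i u_i ≤ 2c/√t for every t ≥ 1 and every c ≥ 0. -/

import Mathlib

private lemma stmt15_aux (Hr nr c sn sn1 : ℝ) (hc : 0 ≤ c) (hsnp : 0 < sn) (hsn1p : 0 < sn1)
    (hH1 : 1 ≤ Hr) (hn0 : 0 ≤ nr) (hkey : 2*nr*sn1 ≤ (2*nr+2)*sn) :
    (Hr+1)/(Hr+nr+1)*(c/sn1) + (1-(Hr+1)/(Hr+nr+1))*(2*c/sn) ≤ 2*c/sn1 := by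
  have hD : (0:ℝ) < Hr+nr+1 := by linarith
  have hdiff : 2*c/sn1 - ((Hr+1)/(Hr+nr+1)*(c/sn1) + (1-(Hr+1)/(Hr+nr+1))*(2*c/sn))
      = (c*((Hr+2*nr+1)*sn - 2*nr*sn1)) / ((Hr+nr+1)*sn*sn1) := by
    field_simp
    ring
  have hnum : 0 ≤ c*((Hr+2*nr+1)*sn - 2*nr*sn1) := by
    apply mul_nonneg hc
    nlinarith
  have : 0 ≤ (c*((Hr+2*nr+1)*sn - 2*nr*sn1)) / ((Hr+nr+1)*sn*sn1) :=
    div_nonneg hnum (by positivity)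
  linarith


theorem stmt15 (H : ℕ) (hH : 1 ≤ H)
    (α : ℕ → ℝ) (hα : ∀ t : ℕ, α t = (H + 1) / (H + t))
    (w : ℕ → ℕ → ℝ)
    (hw : ∀ t i : ℕ, w t i = α i * ∏ j ∈ Finset.Icc (i + 1) t, (1 - α j))
    (c : ℝ) (hc : 0 ≤ c) (u : ℕ → ℝ) (hu : ∀ i : ℕ, u i = c / Real.sqrt i) :
    ∀ t : ℕ, 1 ≤ t →
      c / Real.sqrt t ≤ ∑ i ∈ Finset.Icc 1 t, w t i * u i ∧
      ∑ i ∈ Finset.Icc 1 t, w t i * u i ≤ 2 * c / Real.sqrt t := by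
  have hα1 : α 1 = 1 := by
    rw [hα]
    push_cast
    rw [div_self]
    positivity
  have hαb : ∀ j : ℕ, 1 ≤ j → 0 < α j ∧ α j ≤ 1 := by
    intro j hj
    rw [hα]
    have h1 : (0:ℝ) < (H:ℝ) + j := by positivity
    constructor
    · apply div_pos (by positivity) h1
    · rw [div_le_one h1]
      have : (1:ℝ) ≤ (j:ℝ) := by exact_mod_cast hj
      linarith
  have hrec : ∀ t : ℕ, 1 ≤ t →
      ∑ i ∈ Finset.Icc 1 (t+1), w (t+1) i * u i
      = α (t+1) * u (t+1) + (1 - α (t+1)) * ∑ i ∈ Finset.Icc 1 t, w t i * u i := by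
    intro t ht
    rw [Finset.sum_Icc_succ_top (by omega)]
    have h1 : ∀ i ∈ Finset.Icc 1 t, w (t+1) i * u i = (1 - α (t+1)) * (w t i * u i) := by
      intro i hi
      simp only [Finset.mem_Icc] at hi
      rw [hw, hw, Finset.prod_Icc_succ_top (by omega)]
      ring
    rw [Finset.sum_congr rfl h1, ← Finset.mul_sum, hw]
    have he : Finset.Icc (t+1+1) (t+1) = ∅ := Finset.Icc_eq_empty (by omega)
    rw [he, Finset.prod_empty]
    ring
  intro t ht
  induction t, ht using Nat.le_induction with
  | base =>
    have he : Finset.Icc (1+1) 1 = ∅ := Finset.Icc_eq_empty (by omega)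
    simp [hw, hu, hα1, he, Real.sqrt_one]
    linarith
  | succ n hn ih =>
    obtain ⟨ihl, ihr⟩ := ih
    rw [hrec n hn, hu]
    set sn := Real.sqrt n with hsn
    set sn1 := Real.sqrt (n+1) with hsn1
    have hsnp : 0 < sn := Real.sqrt_pos.mpr (by exact_mod_cast Nat.pos_of_ne_zero (by omega))
    have hsn1p : 0 < sn1 := Real.sqrt_pos.mpr (by positivity)
    have hle : sn ≤ sn1 := Real.sqrt_le_sqrt (by push_cast; linarith)
    have hsq : sn * sn = n := Real.mul_self_sqrt (by positivity)
    have hsq1 : sn1 * sn1 = (n:ℝ) + 1 := by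
      rw [hsn1]
      have := Real.mul_self_sqrt (show (0:ℝ) ≤ (n:ℝ)+1 by positivity)
      push_cast at this ⊢
      linarith
    obtain ⟨hαp, hαle⟩ := hαb (n+1) (by omega)
    have hcast : ((n:ℕ)+1 : ℕ) = ((n:ℝ)+1 : ℝ) := by push_cast; ring
    have hun1 : Real.sqrt ((n:ℕ)+1 : ℕ) = sn1 := by rw [hsn1]; norm_cast
    rw [hun1]
    have h4 : c / sn1 ≤ c / sn := by
      rw [div_le_div_iff₀ hsn1p hsnp]
      nlinarith
    constructor
    · -- lower bound
      have h5 : (1 - α (n+1)) * (c / sn1) ≤ (1 - α (n+1)) * ∑ i ∈ Finset.Icc 1 n, w n i * u i := by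
        apply mul_le_mul_of_nonneg_left (le_trans h4 ihl) (by linarith)
      nlinarith [h5]
    · -- upper bound
      have h5 : (1 - α (n+1)) * ∑ i ∈ Finset.Icc 1 n, w n i * u i
          ≤ (1 - α (n+1)) * (2 * c / sn) := by
        apply mul_le_mul_of_nonneg_left ihr (by linarith)
      have hαval : α (n+1) = ((H:ℝ)+1) / ((H:ℝ)+n+1) := by
        rw [hα]; push_cast; ring_nf
      have hD : (0:ℝ) < (H:ℝ)+n+1 := by positivity
      have hkey : 2*(n:ℝ)*sn1 ≤ (2*n+2)*sn := by
        nlinarith [sq_nonneg ((2*(n:ℝ)+2)*sn - 2*n*sn1), sq_nonneg ((2*(n:ℝ)+2)*sn + 2*n*sn1),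
          mul_pos hsnp hsn1p, Nat.cast_nonneg (α := ℝ) n]
      have hH1 : (1:ℝ) ≤ (H:ℝ) := by exact_mod_cast hH
      have hmain : α (n+1) * (c / sn1) + (1 - α (n+1)) * (2 * c / sn) ≤ 2 * c / sn1 := by
        rw [hαval]
        have hne1 : sn ≠ 0 := ne_of_gt hsnp
        have hne2 : sn1 ≠ 0 := ne_of_gt hsn1p
        have hne3 : (H:ℝ)+(n:ℝ)+1 ≠ 0 := ne_of_gt hD
        have hck : c * (2*(n:ℝ)*sn1) ≤ c * ((2*n+2)*sn) := mul_le_mul_of_nonneg_left hkey hc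
        have hck2 : 0 ≤ c * sn := mul_nonneg hc hsnp.le
        exact stmt15_aux H n c sn sn1 hc hsnp hsn1p hH1 (Nat.cast_nonneg n) hkey
      calc α (n+1) * (c / sn1) + (1 - α (n+1)) * ∑ i ∈ Finset.Icc 1 n, w n i * u i
          ≤ α (n+1) * (c / sn1) + (1 - α (n+1)) * (2 * c / sn) := by linarith
        _ ≤ 2 * c / sn1 := hmain
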